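/- arXiv:1502.01447 — 3 statements merged into one kernel-verified Lean document; each statement's English description precedes it below -/
import Mathlib

section
/- Let m,n∈ℕ with m≥2n and let 0<t<1. Then F_{m,n}(t) ≤ binom(m,n)·b_n(t). -/
open scoped BigOperators ENNReal
open Finset

noncomputable section

namespace Smolyak

/-- `f` is 1-periodic in each of its `d` variables. -/
def Periodic1 {d : ℕ} (f : (Fin d → ℝ) → ℝ) : Prop :=
  ∀ (x : Fin d → ℝ) (i : Fin d), f (Function.update x i (x i + 1)) = f x

/-- sup-norm of a function on the torus. -/
def supNorm {d : ℕ} (f : (Fin d → ℝ) → ℝ) : ℝ := ⨆ x, |f x|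

/-- `L_p` norm (over the unit cube) for `0<p≤∞`. -/
def pNorm (d : ℕ) (p : ℝ≥0∞) (f : (Fin d → ℝ) → ℝ) : ℝ :=
  if p = ∞ then supNorm f
  else (∫ x in Set.Icc (0 : Fin d → ℝ) 1, |f x| ^ p.toReal) ^ (1 / p.toReal)

/-- `(p+1)^{1/p}`, with the convention that it equals `1` for `p = ∞`. -/
def pfac (p : ℝ≥0∞) : ℝ := if p = ∞ then 1 else (p.toReal + 1) ^ (1 / p.toReal)

/-- `[r(p+1)]^{-1/p}`, with the convention that it equals `1` for `p = ∞`. -/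
def rpfac (r : ℕ) (p : ℝ≥0∞) : ℝ :=
  if p = ∞ then 1 else ((r : ℝ) * (p.toReal + 1)) ^ (-(1 / p.toReal))

/-- the mixed `(l,u)`-th difference operator `Δ_h^{l,u}`. -/
def deltaMix (d l : ℕ) (u : Finset (Fin d)) (h : Fin d → ℝ)
    (f : (Fin d → ℝ) → ℝ) (x : Fin d → ℝ) : ℝ :=
  ∑ j ∈ Fintype.piFinset (fun i => Finset.range (if i ∈ u then l + 1 else 1)),
    (∏ i ∈ u, ((-1 : ℝ) ^ (l - j i) * (l.choose (j i) : ℝ))) *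
      f (fun i => x i + (j i : ℝ) * h i)

/-- the Hölder–Lipschitz mixed seminorm `|f|_{H^α(u)}` (difference order `l`). -/
def holderSemi (d l : ℕ) (α : ℝ) (u : Finset (Fin d)) (f : (Fin d → ℝ) → ℝ) : ℝ :=
  ⨆ h : {h : Fin d → ℝ // ∀ i, h i ∈ Set.Ioc (0:ℝ) 1},
    (∏ i ∈ u, (h.1 i) ^ (-α)) * supNorm (deltaMix d l u h.1 f)

/-- membership in the unit ball `U^α_∞` of `H^α` (difference order `l`):
continuous, 1-periodic, and all the seminorm quotients are `≤ 1`. -/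
def memU (d l : ℕ) (α : ℝ) (f : (Fin d → ℝ) → ℝ) : Prop :=
  Continuous f ∧ Periodic1 f ∧
    ∀ (u : Finset (Fin d)) (h : Fin d → ℝ), (∀ i, h i ∈ Set.Ioc (0:ℝ) 1) →
      ∀ x, (∏ i ∈ u, (h i) ^ (-α)) * |deltaMix d l u h f x| ≤ 1

/-- the class `U^{α,s}_∞`: unit ball with zero boundary values. -/
def Us (d : ℕ) (α : ℝ) : Set ((Fin d → ℝ) → ℝ) :=
  {f | memU d 2 α f ∧ ∀ x : Fin d → ℝ, (∃ j : Fin d, ∃ z : ℤ, x j = (z : ℝ)) → f x = 0}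

/-- the `j`-th variable is active for `f`. -/
def ActiveVar {d : ℕ} (f : (Fin d → ℝ) → ℝ) (j : Fin d) : Prop :=
  ∃ x t, f (Function.update x j t) ≠ f x

/-- the class `U^{α,ν}_∞` (difference order `l`): members of the unit ball with
at most `ν` active variables. -/
def UnuL (d l : ℕ) (α : ℝ) (ν : ℕ) : Set ((Fin d → ℝ) → ℝ) :=
  {f | memU d l α f ∧ ∃ u : Finset (Fin d), u.card ≤ ν ∧ ∀ j, ActiveVar f j → j ∈ u}

/-- `U^{α,ν}_∞` for smoothness `α ≤ 2` (order-2 differences). -/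
def Unu (d : ℕ) (α : ℝ) (ν : ℕ) : Set ((Fin d → ℝ) → ℝ) := UnuL d 2 α ν

/-! ### Faber system -/

/-- the hat function `M_2` with knots `0,1,2`. -/
def hatM (x : ℝ) : ℝ := max 0 (1 - |x - 1|)

/-- univariate periodic Faber hat `φ_{k,s}`. -/
def phi1 (k s : ℕ) (x : ℝ) : ℝ :=
  if k = 0 then 1 else hatM (2 ^ k * Int.fract x - 2 * s)

/-- support of a multi-index. -/
def suppK {d : ℕ} (k : Fin d → ℕ) : Finset (Fin d) :=
  Finset.univ.filter fun i => k i ≠ 0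

/-- the Faber coefficient functional `λ_{k,s}(f)` (coordinatewise composition of
`f ↦ f(0)` for `k_i = 0` and `f ↦ -½Δ²_{2^{-k_i}}(f, 2^{-k_i+1}s_i)` for `k_i ≥ 1`). -/
def lamF (d : ℕ) (k s : Fin d → ℕ) (f : (Fin d → ℝ) → ℝ) : ℝ :=
  (-(1/2) : ℝ) ^ (suppK k).card *
    deltaMix d 2 (suppK k) (fun i => (2:ℝ) ^ (-(k i : ℤ))) f
      (fun i => if k i = 0 then 0 else (2:ℝ) ^ (-(k i : ℤ) + 1) * (s i : ℝ))

/-- the Faber block `q_k(f) = Σ_{s∈Z^d(k)} λ_{k,s}(f) φ_{k,s}`. -/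
def qF (d : ℕ) (k : Fin d → ℕ) (f : (Fin d → ℝ) → ℝ) (x : Fin d → ℝ) : ℝ :=
  ∑ s ∈ Fintype.piFinset (fun i => Finset.range (2 ^ (k i - 1))),
    lamF d k s f * ∏ i, phi1 (k i) (s i) (x i)

/-- the index set `{k ∈ ℕ^d : |k|₁ = m}` (all `k_i ≥ 1`). -/
def kSetRing (d m : ℕ) : Finset (Fin d → ℕ) :=
  (Fintype.piFinset fun _ : Fin d => Finset.Icc 1 m).filter fun k => ∑ i, k i = m

/-- the operator `R̊_m(f) = Σ_{k∈ℕ^d, |k|₁≤m} q_k(f)`. -/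
def RringOp (d m : ℕ) (f : (Fin d → ℝ) → ℝ) (x : Fin d → ℝ) : ℝ :=
  ∑ k ∈ (Fintype.piFinset fun _ : Fin d => Finset.Icc 1 m).filter (fun k => ∑ i, k i ≤ m),
    qF d k f x

/-- the operator `R^ν_m(f) = Σ_{k∈ℤ₊^d, |supp k|≤ν, |k|₁≤m} q_k(f)`. -/
def RnuOp (d m ν : ℕ) (f : (Fin d → ℝ) → ℝ) (x : Fin d → ℝ) : ℝ :=
  ∑ k ∈ (Fintype.piFinset fun _ : Fin d => Finset.range (m+1)).filter
      (fun k => ∑ i, k i ≤ m ∧ (suppK k).card ≤ ν),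
    qF d k f x

/-- the dyadic point `2^{-k}s`. -/
def toPoint (d : ℕ) (ks : (Fin d → ℕ) × (Fin d → ℕ)) : Fin d → ℝ :=
  fun i => (ks.2 i : ℝ) / 2 ^ (ks.1 i)

/-- the (interior) Smolyak grid `G̊(m)`. -/
def ringGrid (d m : ℕ) : Finset (Fin d → ℝ) :=
  (((Fintype.piFinset fun _ : Fin d => Finset.Icc 1 m) ×ˢ
      (Fintype.piFinset fun _ : Fin d => Finset.range (2 ^ m))).filter
    fun ks => (∑ i, ks.1 i = m) ∧ ∀ i, 1 ≤ ks.2 i ∧ ks.2 i < 2 ^ ks.1 i).image (toPoint d)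

/-- the Smolyak grid `G^ν(m)`. -/
def nuGrid (d m ν : ℕ) : Finset (Fin d → ℝ) :=
  (((Fintype.piFinset fun _ : Fin d => Finset.range (m+1)) ×ˢ
      (Fintype.piFinset fun _ : Fin d => Finset.range (2 ^ m))).filter
    fun ks => (∑ i, ks.1 i = m) ∧ (suppK ks.1).card ≤ ν ∧ ∀ i, ks.2 i < 2 ^ ks.1 i).image (toPoint d)

/-- the quantity of optimal sampling recovery on the grid `G` w.r.t. the class `F`. -/
def recErr (d : ℕ) (p : ℝ≥0∞) (G : Finset (Fin d → ℝ)) (F : Set ((Fin d → ℝ) → ℝ)) : ℝ≥0∞ :=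
  ⨅ Φ : (Fin d → ℝ) → (Fin d → ℝ) → ℝ,
    ⨆ f ∈ F, ENNReal.ofReal (pNorm d p (fun x => f x - ∑ ξ ∈ G, f ξ * Φ ξ x))

/-- the quantity of optimal cubature on the grid `G` w.r.t. the class `F`. -/
def cubErr (d : ℕ) (G : Finset (Fin d → ℝ)) (F : Set ((Fin d → ℝ) → ℝ)) : ℝ≥0∞ :=
  ⨅ w : (Fin d → ℝ) → ℝ,
    ⨆ f ∈ F, ENNReal.ofReal |(∫ x in Set.Icc (0 : Fin d → ℝ) 1, f x) - ∑ ξ ∈ G, w ξ * f ξ|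

/-! ### auxiliary quantities -/

/-- `F_{m,n}(t) = Σ_{s≥0} binom(m+s,n) t^s`. -/
def Fser (m n : ℕ) (t : ℝ) : ℝ := ∑' s : ℕ, ((m + s).choose n : ℝ) * t ^ s

/-- the function `b_n(t)`. -/
def bfun (n : ℕ) (t : ℝ) : ℝ :=
  if t < 1/2 then (1 - 2*t)⁻¹
  else if t = 1/2 then 2*((n : ℝ)+1)
  else (2*t - 1)⁻¹ * (t/(1-t))^(n+1)

/-- `β(l,m)`. -/
def beta (α : ℝ) (l m : ℕ) : ℝ :=
  if l = 0 then 1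
  else (((2:ℝ) ^ α - 1)⁻¹) ^ l * ∑ s ∈ Finset.range l, (m.choose s : ℝ) * ((2:ℝ) ^ α - 1) ^ s

/-- `|2^α - 2|^{-|sgn(α-1)|}`. -/
def sgnfac (α : ℝ) : ℝ := if α = 1 then 1 else |(2:ℝ) ^ α - 2|⁻¹

/-- the case distinction factor `κ`: `1` for `α>1`, `d` for `α=1`, `(2^α-1)^{-d}` for `α<1`. -/
def kap (α : ℝ) (d : ℕ) : ℝ :=
  if 1 < α then 1 else if α = 1 then (d : ℝ) else (((2:ℝ) ^ α - 1)⁻¹) ^ d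

/-- the constant `å(d)`. -/
def aring (α : ℝ) (p : ℝ≥0∞) (d : ℕ) : ℝ := sgnfac α * ((2 * pfac p)⁻¹) ^ d * kap α d

/-- the constant `a(ν)`. -/
def anu (α : ℝ) (p : ℝ≥0∞) (ν : ℕ) : ℝ := sgnfac α * (1 + (2 * pfac p)⁻¹) ^ ν * kap α ν

/-- `γ(ν,m)`. -/
def gammaB (α : ℝ) (p : ℝ≥0∞) (ν m : ℕ) : ℝ :=
  ∑ l ∈ Finset.range (ν+1), (ν.choose l : ℝ) * ((2 * pfac p)⁻¹) ^ l * beta α l m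

/-- `γ'(ν,m)`. -/
def gammaP (α : ℝ) (ν m : ℕ) : ℝ :=
  ∑ l ∈ Finset.Icc 1 ν, (ν.choose l : ℝ) * ((128:ℝ)⁻¹) ^ l * beta α l m

/-! ### B-splines and quasi-interpolation -/

/-- the cardinal B-spline `M_ℓ` of order `ℓ` (supported on `[0,ℓ]`); `Msp 0 = 0` by convention. -/
def Msp : ℕ → ℝ → ℝ
  | 0, _ => 0
  | 1, x => if 0 ≤ x ∧ x < 1 then 1 else 0
  | (n+2), x => ∫ t in (0:ℝ)..1, Msp (n+1) (x - t)

/-- `g_{k,s}`: periodized scaled cubic B-spline. -/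
def gks (k s : ℕ) (x : ℝ) : ℝ := Msp 4 (2 ^ (k + 2) * Int.fract x - 4 * s)

/-- the fooling function `f_{m,n}`. -/
def fmnFun (d : ℕ) (α : ℝ) (m n : ℕ) (x : Fin d → ℝ) : ℝ :=
  ((2:ℝ) ^ (5 * d))⁻¹ * ∑ l ∈ Finset.Icc m n, (2:ℝ) ^ (-(α * (l : ℝ))) *
    ∑ k ∈ kSetRing d l, ∑ s ∈ Fintype.piFinset (fun i => Finset.range (2 ^ k i)),
      ∏ j, gks (k j) (s j) (x j)

/-- the mesh size `h^{(k)} = (2r)^{-1} 2^{-k}` (allowing integer levels). -/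
def hkmesh (r : ℕ) (t : ℤ) : ℝ := ((2 * r : ℕ) : ℝ)⁻¹ * (2:ℝ) ^ (-t)

/-- the sequence `Λ` is even and supported on `|j| ≤ μ`. -/
def EvenSeq (μ : ℕ) (lam : ℤ → ℝ) : Prop :=
  (∀ j, lam (-j) = lam j) ∧ ∀ j : ℤ, (μ : ℤ) < |j| → lam j = 0

/-- the univariate operator `Q` built from `M_{2r}` and `Λ` reproduces all polynomials
of degree at most `2r - 1`. -/
def Reproduces (r μ : ℕ) (lam : ℤ → ℝ) : Prop :=
  ∀ g : Polynomial ℝ, g.natDegree < 2 * r → ∀ x : ℝ,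
    (∑' s : ℤ, (∑ j ∈ Finset.Icc (-(μ:ℤ)) (μ:ℤ), lam j * g.eval ((s:ℝ) - (j:ℝ) + (r:ℝ))) *
      Msp (2*r) (x - (s:ℝ))) = g.eval x

/-- the tensor-product quasi-interpolation operator `∏_i Q_{t_i}` for 1-periodic functions
(equal to `0` whenever some level `t_i = -1`). -/
def Qmulti (d r μ : ℕ) (lam : ℤ → ℝ) (t : Fin d → ℤ) (f : (Fin d → ℝ) → ℝ)
    (x : Fin d → ℝ) : ℝ :=
  if ∀ i, 0 ≤ t i then
    ∑' s : Fin d → ℤ,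
      (∑ j ∈ Fintype.piFinset (fun _ : Fin d => Finset.Icc (-(μ:ℤ)) (μ:ℤ)),
        (∏ i, lam (j i)) * f (fun i => hkmesh r (t i) * ((s i : ℝ) - (j i : ℝ) + (r:ℝ))))
      * ∏ i, Msp (2*r) (x i / hkmesh r (t i) - (s i : ℝ))
  else 0

/-- the mixed dyadic block `q_k = ∏_i (Q_{k_i} - Q_{k_i - 1})`. -/
def qsp (d r μ : ℕ) (lam : ℤ → ℝ) (k : Fin d → ℕ) (f : (Fin d → ℝ) → ℝ)
    (x : Fin d → ℝ) : ℝ :=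
  ∑ v : Finset (Fin d), (-1:ℝ) ^ v.card *
    Qmulti d r μ lam (fun i => if i ∈ v then (k i : ℤ) - 1 else (k i : ℤ)) f x

/-- the operator `R^ν_m` built from the B-spline quasi-interpolation blocks. -/
def RnuSp (d r μ : ℕ) (lam : ℤ → ℝ) (m ν : ℕ) (f : (Fin d → ℝ) → ℝ)
    (x : Fin d → ℝ) : ℝ :=
  ∑ k ∈ (Fintype.piFinset fun _ : Fin d => Finset.range (m+1)).filter
      (fun k => ∑ i, k i ≤ m ∧ (suppK k).card ≤ ν),
    qsp d r μ lam k f x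

/-- the symbol `P_Λ(z) = z^r Σ_j λ(j) z^j`. -/
def PLam (r μ : ℕ) (lam : ℤ → ℝ) : LaurentPolynomial ℝ :=
  LaurentPolynomial.T (r : ℤ) *
    ∑ j ∈ Finset.Icc (-(μ:ℤ)) (μ:ℤ), LaurentPolynomial.C (lam j) * LaurentPolynomial.T j

/-- `P_Λ(z²)`. -/
def PLam2 (r μ : ℕ) (lam : ℤ → ℝ) : LaurentPolynomial ℝ :=
  LaurentPolynomial.T (2 * r : ℤ) *
    ∑ j ∈ Finset.Icc (-(μ:ℤ)) (μ:ℤ), LaurentPolynomial.C (lam j) * LaurentPolynomial.T (2*j)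

/-- `P_even(z) := P_Λ(z) − 2^{−2r+1} P_Λ(z²) Σ_{j=0}^{r} binom(2r,2j) z^{−2j}`. -/
def Peven (r μ : ℕ) (lam : ℤ → ℝ) : LaurentPolynomial ℝ :=
  PLam r μ lam - LaurentPolynomial.C (((2:ℝ) ^ (2*r-1))⁻¹) * PLam2 r μ lam *
    ∑ j ∈ Finset.range (r+1),
      LaurentPolynomial.C (((2*r).choose (2*j) : ℝ)) * LaurentPolynomial.T (-(2*(j:ℤ)))

/-- `P_odd(z) := P_Λ(z) − 2^{−2r+1} P_Λ(z²) Σ_{j=0}^{r−1} binom(2r,2j+1) z^{−2j−1}`. -/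
def Podd (r μ : ℕ) (lam : ℤ → ℝ) : LaurentPolynomial ℝ :=
  PLam r μ lam - LaurentPolynomial.C (((2:ℝ) ^ (2*r-1))⁻¹) * PLam2 r μ lam *
    ∑ j ∈ Finset.range r,
      LaurentPolynomial.C (((2*r).choose (2*j+1) : ℝ)) * LaurentPolynomial.T (-(2*(j:ℤ)+1))

/-- the norm `‖P‖ = Σ |coefficients|` of a Laurent polynomial. -/
def lpNorm (P : LaurentPolynomial ℝ) : ℝ := ∑ n ∈ P.coeff.support, |P.coeff n|

/-- `b = ‖L_Λ‖_{C(𝕋)} = sup_x |Σ_{s∈ℤ} Σ_{|j|≤μ} λ(j) M_{2r}(x−j−s)|`. -/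
def bLam (r μ : ℕ) (lam : ℤ → ℝ) : ℝ :=
  ⨆ x : ℝ, |∑' s : ℤ, ∑ j ∈ Finset.Icc (-(μ:ℤ)) (μ:ℤ), lam j * Msp (2*r) (x - (j:ℝ) - (s:ℝ))|

/-- `δ(ν,a,b,m) = Σ_{l=0}^{ν} binom(ν,l) a^l b^{ν−l} β(l,m)`. -/
def deltaB (α : ℝ) (ν : ℕ) (a b : ℝ) (m : ℕ) : ℝ :=
  ∑ l ∈ Finset.range (ν+1), (ν.choose l : ℝ) * a ^ l * b ^ (ν - l) * beta α l m

/-- the constant `c(ν,a,b)`. -/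
def cB (α : ℝ) (ν : ℕ) (a b : ℝ) : ℝ :=
  sgnfac α *
    (if 1 < α then (a + b) ^ ν
     else if α = 1 then (ν : ℝ) * (a + b) ^ ν
     else (a / ((2:ℝ) ^ α - 1) + b) ^ ν)

/-- the case distinction factor for cubature: `(5/4)^ν`, `ν(5/4)^ν`, `[1+1/(4(2^α−1))]^ν`. -/
def kapInt (α : ℝ) (ν : ℕ) : ℝ :=
  if 1 < α then (5/4 : ℝ) ^ ν
  else if α = 1 then (ν : ℝ) * (5/4 : ℝ) ^ ν
  else (1 + (4 * ((2:ℝ) ^ α - 1))⁻¹) ^ ν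

lemma mychoose_le {m n k : ℕ} (hk : k ≤ n) (hn : 2 * n ≤ m) :
    m.choose k ≤ m.choose n := by
  induction hk using Nat.decreasingInduction with
  | self => exact le_refl _
  | of_succ r hr ih =>
      exact (Nat.choose_le_succ_of_lt_half_left (by omega)).trans ih

lemma myhasSum_choose (i : ℕ) {t : ℝ} (h0 : 0 ≤ t) (h1 : t < 1) :
    HasSum (fun s : ℕ => (s.choose i : ℝ) * t ^ s) (t ^ i / (1 - t) ^ (i + 1)) := by
  have hnorm : ‖t‖ < 1 := by rwa [Real.norm_eq_abs, abs_of_nonneg h0]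
  have h2 : HasSum (fun u : ℕ => (((u + i).choose i : ℝ)) * t ^ (u + i))
      (t ^ i / (1 - t) ^ (i + 1)) := by
    have h1' := (hasSum_choose_mul_geometric_of_norm_lt_one i hnorm).mul_left (t ^ i)
    simpa [pow_add, div_eq_mul_inv, mul_inv, mul_comm, mul_assoc, mul_left_comm] using h1'
  have h3 := (hasSum_nat_add_iff (f := fun s : ℕ => (s.choose i : ℝ) * t ^ s) i).mp h2
  have hz : ∑ s ∈ Finset.range i, ((s.choose i : ℝ)) * t ^ s = 0 :=
    Finset.sum_eq_zero fun s hs => by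
      simp [Nat.choose_eq_zero_of_lt (Finset.mem_range.mp hs)]
  rw [hz, add_zero] at h3
  exact h3

lemma myhasSum_main (m n : ℕ) {t : ℝ} (h0 : 0 ≤ t) (h1 : t < 1) :
    HasSum (fun s : ℕ => ((m + s).choose n : ℝ) * t ^ s)
      (∑ j ∈ range (n + 1), (m.choose j : ℝ) * (t ^ (n - j) / (1 - t) ^ (n - j + 1))) := by
  have H := hasSum_sum (f := fun j (s : ℕ) => (m.choose j : ℝ) * ((s.choose (n - j) : ℝ) * t ^ s))
    (s := range (n + 1))
    (fun j _ => (myhasSum_choose (n - j) h0 h1).mul_left (m.choose j : ℝ))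
  convert H using 1
  funext s
  rw [Nat.add_choose_eq, Finset.Nat.sum_antidiagonal_eq_sum_range_succ_mk]
  push_cast
  rw [Finset.sum_mul]
  exact Finset.sum_congr rfl fun j _ => by ring

lemma myT_le_bfun (n : ℕ) {t : ℝ} (ht0 : 0 < t) (ht1 : t < 1) :
    ∑ i ∈ range (n + 1), t ^ i / (1 - t) ^ (i + 1) ≤ bfun n t := by
  have h1t : 0 < 1 - t := by linarith
  have hterm : ∀ i : ℕ, t ^ i / (1 - t) ^ (i + 1) = (t / (1 - t)) ^ i * (1 - t)⁻¹ := by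
    intro i
    rw [div_pow, pow_succ]
    field_simp
  have hsum : ∑ i ∈ range (n + 1), t ^ i / (1 - t) ^ (i + 1)
      = (∑ i ∈ range (n + 1), (t / (1 - t)) ^ i) * (1 - t)⁻¹ := by
    rw [Finset.sum_mul]
    exact Finset.sum_congr rfl fun i _ => hterm i
  rcases lt_trichotomy t (1/2) with hlt | heq | hgt
  · -- t < 1/2
    have hr1 : t / (1 - t) < 1 := (div_lt_one h1t).mpr (by linarith)
    have hr0 : 0 ≤ t / (1 - t) := div_nonneg ht0.le h1t.le
    have hrne : t / (1 - t) ≠ 1 := hr1.ne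
    have hg : ∑ i ∈ range (n + 1), (t / (1 - t)) ^ i ≤ (1 - t / (1 - t))⁻¹ := by
      rw [geom_sum_eq hrne]
      have hd : t / (1 - t) - 1 ≠ 0 := sub_ne_zero.mpr hrne
      have heq2 : ((t / (1 - t)) ^ (n + 1) - 1) / (t / (1 - t) - 1)
          = (1 - (t / (1 - t)) ^ (n + 1)) * (1 - t / (1 - t))⁻¹ := by
        rw [← neg_div_neg_eq, neg_sub, neg_sub, div_eq_mul_inv]
      rw [heq2]
      have : 1 - (t / (1 - t)) ^ (n + 1) ≤ 1 := by
        have := pow_nonneg hr0 (n + 1); linarith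
      calc (1 - (t / (1 - t)) ^ (n + 1)) * (1 - t / (1 - t))⁻¹
          ≤ 1 * (1 - t / (1 - t))⁻¹ :=
            mul_le_mul_of_nonneg_right this (inv_nonneg.mpr (by linarith))
        _ = (1 - t / (1 - t))⁻¹ := one_mul _
    have hkey : (1 - t / (1 - t))⁻¹ * (1 - t)⁻¹ = (1 - 2 * t)⁻¹ := by
      rw [← mul_inv]
      congr 1
      field_simp
      ring
    rw [hsum, bfun, if_pos hlt, ← hkey]
    exact mul_le_mul_of_nonneg_right hg (inv_nonneg.mpr h1t.le)
  · -- t = 1/2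
    subst heq
    have : ∀ i : ℕ, ((1:ℝ)/2) ^ i / (1 - 1/2) ^ (i + 1) = 2 := by
      intro i
      rw [show (1:ℝ) - 1/2 = 1/2 by norm_num, pow_succ, div_mul_eq_div_div,
        div_self (by positivity : ((1:ℝ)/2) ^ i ≠ 0)]
      norm_num
    rw [Finset.sum_congr rfl fun i _ => this i, Finset.sum_const, Finset.card_range,
      nsmul_eq_mul, bfun, if_neg (lt_irrefl _), if_pos rfl]
    push_cast
    ring_nf
    exact le_refl _
  · -- t > 1/2
    have hr1 : 1 < t / (1 - t) := (one_lt_div h1t).mpr (by linarith)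
    have hrne : t / (1 - t) ≠ 1 := hr1.ne'
    have hd : 0 < t / (1 - t) - 1 := by linarith
    have hg : ∑ i ∈ range (n + 1), (t / (1 - t)) ^ i
        ≤ (t / (1 - t)) ^ (n + 1) / (t / (1 - t) - 1) := by
      rw [geom_sum_eq hrne]
      exact (div_le_div_iff_of_pos_right hd).mpr (by nlinarith [pow_nonneg (by positivity : (0:ℝ) ≤ t / (1 - t)) (n+1)])
    have hkey : (t / (1 - t)) ^ (n + 1) / (t / (1 - t) - 1) * (1 - t)⁻¹
        = (2 * t - 1)⁻¹ * (t / (1 - t)) ^ (n + 1) := by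
      rw [div_eq_mul_inv, mul_assoc, ← mul_inv, mul_comm]
      congr 2
      field_simp
      ring
    rw [hsum, bfun, if_neg (by linarith), if_neg (by intro h; rw [h] at hgt; linarith), ← hkey]
    exact mul_le_mul_of_nonneg_right hg (inv_nonneg.mpr h1t.le)

/-- `F_{m,n}(t) ≤ binom(m,n) b_n(t)` for `m ≥ 2n`. -/
theorem Fser_le_bfun (m n : ℕ) (hn : 1 ≤ n) (hmn : 2 * n ≤ m) (t : ℝ)
    (ht0 : 0 < t) (ht1 : t < 1) :
    Fser m n t ≤ (m.choose n : ℝ) * bfun n t := by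
  have H := myhasSum_main m n ht0.le ht1
  have hF : Fser m n t = ∑ j ∈ range (n + 1),
      (m.choose j : ℝ) * (t ^ (n - j) / (1 - t) ^ (n - j + 1)) := H.tsum_eq
  have h1t : 0 < 1 - t := by linarith
  rw [hF]
  calc ∑ j ∈ range (n + 1), (m.choose j : ℝ) * (t ^ (n - j) / (1 - t) ^ (n - j + 1))
      ≤ ∑ j ∈ range (n + 1), (m.choose n : ℝ) * (t ^ (n - j) / (1 - t) ^ (n - j + 1)) := by
        refine Finset.sum_le_sum fun j hj => ?_
        have hjn : j ≤ n := Nat.lt_succ_iff.mp (Finset.mem_range.mp hj)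
        exact mul_le_mul_of_nonneg_right
          (by exact_mod_cast mychoose_le hjn hmn)
          (div_nonneg (pow_nonneg ht0.le _) (pow_nonneg h1t.le _))
    _ = (m.choose n : ℝ) * ∑ j ∈ range (n + 1), t ^ (n - j) / (1 - t) ^ (n - j + 1) := by
        rw [Finset.mul_sum]
    _ = (m.choose n : ℝ) * ∑ i ∈ range (n + 1), t ^ i / (1 - t) ^ (i + 1) := by
        congr 1
        simpa using Finset.sum_range_reflect (fun i => t ^ i / (1 - t) ^ (i + 1)) (n + 1)
    _ ≤ (m.choose n : ℝ) * bfun n t :=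
        mul_le_mul_of_nonneg_left (myT_le_bfun n ht0 ht1) (Nat.cast_nonneg _)

end Smolyak
end
end

section
/- Let m,n∈ℕ with m≥n and let 0<t<1. Then F_{m,n}(t) ≤ (1/(1−t))·(t/(1−t))^n·exp((1−t)/t)·m^n. -/
open scoped BigOperators ENNReal
open Finset

noncomputable section

namespace Smolyak

/-- `F_{m,n}(t) ≤ (1−t)^{-1} (t/(1−t))^n e^{(1−t)/t} m^n`. -/
theorem Fser_le_exp (m n : ℕ) (hn : 1 ≤ n) (hmn : n ≤ m) (t : ℝ)
    (ht0 : 0 < t) (ht1 : t < 1) :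
    Fser m n t ≤ (1 - t)⁻¹ * (t / (1 - t)) ^ n * Real.exp ((1 - t) / t) * (m : ℝ) ^ n := by
  unfold Fser
  have h1t : (0:ℝ) < 1 - t := by linarith
  have habs : ‖t‖ < 1 := by rw [Real.norm_eq_abs, abs_of_pos ht0]; exact ht1
  have hj : ∀ j : ℕ, HasSum (fun s : ℕ => (s.choose j : ℝ) * t ^ s) (t ^ j / (1 - t) ^ (j + 1)) := by
    intro j
    rw [← hasSum_nat_add_iff' j]
    have h0 : ∑ i ∈ range j, (i.choose j : ℝ) * t ^ i = 0 := by
      apply Finset.sum_eq_zero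
      intro i hi
      rw [Nat.choose_eq_zero_of_lt (mem_range.mp hi)]
      simp
    rw [h0, sub_zero]
    have h := (hasSum_choose_mul_geometric_of_norm_lt_one j habs).mul_left (t ^ j)
    have heq : (fun s : ℕ => (((s + j).choose j : ℕ) : ℝ) * t ^ (s + j)) =
        fun s : ℕ => t ^ j * ((((s + j).choose j : ℕ) : ℝ) * t ^ s) := by
      funext s; ring
    rw [show t ^ j / (1 - t) ^ (j + 1) = t ^ j * (1 / (1 - t) ^ (j + 1)) by rw [mul_one_div]]
    exact heq ▸ h
  set S : ℝ := ∑ p ∈ Finset.HasAntidiagonal.antidiagonal n, (m.choose p.1 : ℝ) * (t ^ p.2 / (1 - t) ^ (p.2 + 1)) with hS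
  have hsum : HasSum (fun s : ℕ => ((m + s).choose n : ℝ) * t ^ s) S := by
    have h : HasSum
        (fun s : ℕ => ∑ p ∈ Finset.HasAntidiagonal.antidiagonal n, (m.choose p.1 : ℝ) * ((s.choose p.2 : ℝ) * t ^ s))
        (∑ p ∈ Finset.HasAntidiagonal.antidiagonal n, (m.choose p.1 : ℝ) * (t ^ p.2 / (1 - t) ^ (p.2 + 1))) :=
      hasSum_sum (fun p _ => (hj p.2).mul_left (m.choose p.1 : ℝ))
    have hfun : (fun s : ℕ => ((m + s).choose n : ℝ) * t ^ s) =
        fun s : ℕ => ∑ p ∈ Finset.HasAntidiagonal.antidiagonal n, (m.choose p.1 : ℝ) * ((s.choose p.2 : ℝ) * t ^ s) := by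
      funext s
      rw [Nat.add_choose_eq]
      push_cast
      rw [Finset.sum_mul]
      congr 1 with p
      ring
    rw [hfun]
    exact h
  rw [hsum.tsum_eq, hS, Nat.sum_antidiagonal_eq_sum_range_succ_mk]
  have key : ∀ i ∈ range (n + 1),
      (m.choose i : ℝ) * (t ^ (n - i) / (1 - t) ^ (n - i + 1)) ≤
      (1 - t)⁻¹ * (t / (1 - t)) ^ n * ((m : ℝ) ^ n * (((1 - t) / t) ^ i / i.factorial)) := by
    intro i hi
    have hin : i ≤ n := Nat.lt_succ_iff.mp (mem_range.mp hi)
    have hm1 : (1:ℝ) ≤ m := by exact_mod_cast le_trans hn hmn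
    have hc : (m.choose i : ℝ) ≤ (m : ℝ) ^ n / i.factorial := by
      calc (m.choose i : ℝ) ≤ (m : ℝ) ^ i / i.factorial := Nat.choose_le_pow_div i m
        _ ≤ (m : ℝ) ^ n / i.factorial := by
            gcongr
    have hrw : (1 - t)⁻¹ * (t / (1 - t)) ^ n * ((m : ℝ) ^ n * (((1 - t) / t) ^ i / i.factorial)) =
        ((m : ℝ) ^ n / i.factorial) * (t ^ (n - i) / (1 - t) ^ (n - i + 1)) := by
      obtain ⟨k, hk⟩ : ∃ k, n = i + k := ⟨n - i, (Nat.add_sub_cancel' hin).symm⟩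
      subst hk
      rw [Nat.add_sub_cancel_left]
      have hfac : (i.factorial : ℝ) ≠ 0 := by exact_mod_cast i.factorial_ne_zero
      have ht0' : t ≠ 0 := ht0.ne'
      have h1t' : (1 - t) ≠ 0 := h1t.ne'
      rw [div_pow, div_pow, pow_add, pow_add, pow_succ]
      field_simp
    rw [hrw]
    have hpos : (0:ℝ) ≤ t ^ (n - i) / (1 - t) ^ (n - i + 1) := by positivity
    exact mul_le_mul_of_nonneg_right hc hpos
  have hA : (0:ℝ) ≤ (1 - t)⁻¹ * (t / (1 - t)) ^ n :=
    mul_nonneg (inv_nonneg.mpr h1t.le) (pow_nonneg (div_nonneg ht0.le h1t.le) n)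
  calc ∑ i ∈ range (n + 1), (m.choose i : ℝ) * (t ^ (n - i) / (1 - t) ^ (n - i + 1))
      ≤ ∑ i ∈ range (n + 1),
        (1 - t)⁻¹ * (t / (1 - t)) ^ n * ((m : ℝ) ^ n * (((1 - t) / t) ^ i / i.factorial)) :=
        Finset.sum_le_sum key
    _ = (1 - t)⁻¹ * (t / (1 - t)) ^ n *
        ((m : ℝ) ^ n * ∑ i ∈ range (n + 1), ((1 - t) / t) ^ i / i.factorial) := by
        rw [← Finset.mul_sum, ← Finset.mul_sum]
    _ ≤ (1 - t)⁻¹ * (t / (1 - t)) ^ n * ((m : ℝ) ^ n * Real.exp ((1 - t) / t)) := by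
        apply mul_le_mul_of_nonneg_left _ hA
        apply mul_le_mul_of_nonneg_left _ (by positivity)
        exact Real.sum_le_exp_of_nonneg (div_nonneg h1t.le ht0.le) (n + 1)
    _ = (1 - t)⁻¹ * (t / (1 - t)) ^ n * Real.exp ((1 - t) / t) * (m : ℝ) ^ n := by ring


end Smolyak
end
end

section
/- Let r∈ℕ and let Q be a quasi-interpolation operator built from the cardinal B-spline M_{2r} and a finite even sequence Λ, reproducing all polynomials of degree at most 2r−1, with symbol P_Λ. Then both Laurent polynomials P_even(z) := P_Λ(z) − 2^{−2r+1} P_Λ(z²) Σ_{j=0}^{r} binom(2r,2j) z^{−2j} and P_odd(z) := P_Λ(z) − 2^{−2r+1} P_Λ(z²) Σ_{j=0}^{r−1} binom(2r,2j+1) z^{−2j−1} are divisible by (z−1)^{2r} in the ring of Laurent polynomials: P_even = (z−1)^{2r} P*_even and P_odd = (z−1)^{2r} P*_odd for Laurent polynomials P*_even, P*_odd. -/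
open scoped BigOperators ENNReal
open Finset

noncomputable section

namespace Smolyak

/-! ### Auxiliary machinery for `Peven_Podd_factor` -/

section PevenPoddAux

open Polynomial LaurentPolynomial MeasureTheory intervalIntegral

/- #### generic sum lemmas -/

lemma sum_range_pascal {M : Type*} [AddCommMonoid M] (n : ℕ) (f : ℕ → M) :
    ∑ k ∈ range (n+2), (n+1).choose k • f k
      = ∑ j ∈ range (n+1), n.choose j • f j + ∑ j ∈ range (n+1), n.choose j • f (j+1) := by
  rw [Finset.sum_range_succ' (fun k => (n+1).choose k • f k)]
  simp only [Nat.choose_succ_succ, add_smul, Finset.sum_add_distrib, Nat.choose_zero_right,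
    one_smul]
  have h2 : ∑ j ∈ range (n+1), n.choose (j+1) • f (j+1) + f 0
      = ∑ j ∈ range (n+1), n.choose j • f j := by
    rw [Finset.sum_range_succ' (fun k => n.choose k • f k) n,
      Finset.sum_range_succ (fun k => n.choose (k+1) • f (k+1)) n]
    simp [Nat.choose_succ_self]
  rw [add_assoc, add_comm (∑ j ∈ range (n+1), n.choose (j+1) • f (j+1)) (f 0), ← add_assoc] at *
  rw [add_assoc, h2, add_comm]

lemma sum_range_even_odd {M : Type*} [AddCommMonoid M] (r : ℕ) (f : ℕ → M) :
    ∑ k ∈ range (2*r+1), f k = ∑ j ∈ range (r+1), f (2*j) + ∑ j ∈ range r, f (2*j+1) := by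
  induction r with
  | zero => simp
  | succ r ih =>
      have h1 : 2*(r+1)+1 = (2*r+1) + 1 + 1 := by ring
      rw [h1, Finset.sum_range_succ, Finset.sum_range_succ, ih,
        Finset.sum_range_succ (fun j => f (2*j)) (r+1), Finset.sum_range_succ (fun j => f (2*j+1)) r]
      have e2 : 2*r+1+1 = 2*(r+1) := by ring
      rw [e2]
      abel

lemma sum_Icc_eq_sum_range (c : ℕ) (N : ℤ) (F : ℤ → ℝ) :
    ∑ s ∈ Finset.Icc (N - c) N, F s = ∑ t ∈ range (c+1), F (N - t) := by
  refine Finset.sum_nbij' (fun s => (N - s).toNat) (fun t => N - (t:ℤ)) ?_ ?_ ?_ ?_ ?_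
  · intro a ha; rw [Finset.mem_Icc] at ha; rw [Finset.mem_range]; omega
  · intro t ht; rw [Finset.mem_range] at ht; rw [Finset.mem_Icc]; omega
  · intro a ha; rw [Finset.mem_Icc] at ha; omega
  · intro t ht; rw [Finset.mem_range] at ht; omega
  · intro a ha; rw [Finset.mem_Icc] at ha; congr 1; omega

lemma sum_Icc_neg (μ : ℕ) (f : ℤ → ℝ) :
    ∑ j ∈ Finset.Icc (-(μ:ℤ)) (μ:ℤ), f j = ∑ j ∈ Finset.Icc (-(μ:ℤ)) (μ:ℤ), f (-j) := by
  refine Finset.sum_nbij' (fun j => -j) (fun j => -j) ?_ ?_ ?_ ?_ ?_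
  · intro a ha; rw [Finset.mem_Icc] at ha ⊢; omega
  · intro a ha; rw [Finset.mem_Icc] at ha ⊢; omega
  · intro a _; omega
  · intro a _; omega
  · intro a _; rw [neg_neg]

/-- Evaluation pairing between a Laurent polynomial and a polynomial at integer shifts. -/
def lapply (P : LaurentPolynomial ℝ) (q : Polynomial ℝ) (N : ℤ) : ℝ :=
  P.coeff.sum fun n a => a * q.eval ((N + n : ℤ) : ℝ)

lemma lapply_zero (q : Polynomial ℝ) (N : ℤ) : lapply 0 q N = 0 := by
  simp [lapply]

lemma lapply_add (P Q : LaurentPolynomial ℝ) (q : Polynomial ℝ) (N : ℤ) :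
    lapply (P + Q) q N = lapply P q N + lapply Q q N := by
  classical
  rw [lapply, lapply, lapply, AddMonoidAlgebra.coeff_add]
  exact Finsupp.sum_add_index' (fun n => zero_mul _) (fun n a b => add_mul a b _)

/-- bundled version -/
def lapplyHom (q : Polynomial ℝ) (N : ℤ) : LaurentPolynomial ℝ →+ ℝ where
  toFun P := lapply P q N
  map_zero' := lapply_zero q N
  map_add' P Q := lapply_add P Q q N

lemma lapply_sum {ι : Type*} (s : Finset ι) (f : ι → LaurentPolynomial ℝ)
    (q : Polynomial ℝ) (N : ℤ) :
    lapply (∑ i ∈ s, f i) q N = ∑ i ∈ s, lapply (f i) q N :=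
  map_sum (lapplyHom q N) f s

lemma lapply_single (a : ℝ) (n : ℤ) (q : Polynomial ℝ) (N : ℤ) :
    lapply (LaurentPolynomial.C a * T n) q N = a * q.eval ((N + n : ℤ) : ℝ) := by
  classical
  rw [← LaurentPolynomial.single_eq_C_mul_T, lapply, AddMonoidAlgebra.coeff_single]
  exact Finsupp.sum_single_index (zero_mul _)

lemma lapply_one (q : Polynomial ℝ) (N : ℤ) : lapply 1 q N = q.eval (N : ℝ) := by
  have : (1 : LaurentPolynomial ℝ) = LaurentPolynomial.C 1 * T 0 := by simp
  rw [this, lapply_single]; simp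

lemma lapply_sub (P Q : LaurentPolynomial ℝ) (q : Polynomial ℝ) (N : ℤ) :
    lapply (P - Q) q N = lapply P q N - lapply Q q N :=
  map_sub (lapplyHom q N) P Q

lemma lapply_q_sub (P : LaurentPolynomial ℝ) (q₁ q₂ : Polynomial ℝ) (N : ℤ) :
    lapply P (q₁ - q₂) N = lapply P q₁ N - lapply P q₂ N := by
  classical
  rw [lapply, lapply, lapply, ← Finsupp.sum_sub]
  exact Finsupp.sum_congr fun n _ => by simp [mul_sub]

lemma lapply_q_zero (P : LaurentPolynomial ℝ) (N : ℤ) : lapply P 0 N = 0 := by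
  simp [lapply]

lemma lapply_mul_T (P : LaurentPolynomial ℝ) (n : ℤ) (q : Polynomial ℝ) (N : ℤ) :
    lapply (P * T n) q N = lapply P q (N + n) := by
  induction P using LaurentPolynomial.induction_on' with
  | add p r hp hr => rw [add_mul, lapply_add, lapply_add, hp, hr]
  | C_mul_T m a =>
      rw [mul_assoc, ← T_add, lapply_single, lapply_single]
      congr 2
      push_cast
      ring

lemma lapply_C_mul (a : ℝ) (P : LaurentPolynomial ℝ) (q : Polynomial ℝ) (N : ℤ) :
    lapply (LaurentPolynomial.C a * P) q N = a * lapply P q N := by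
  induction P using LaurentPolynomial.induction_on' with
  | add p r hp hr => rw [mul_add, lapply_add, lapply_add, hp, hr, mul_add]
  | C_mul_T m b =>
      rw [← mul_assoc, ← map_mul LaurentPolynomial.C, lapply_single, lapply_single, mul_assoc]

lemma lapply_mul_T1_sub_one (P : LaurentPolynomial ℝ) (q : Polynomial ℝ) (N : ℤ) :
    lapply (P * (T 1 - 1)) q N = lapply P (q.comp (X + Polynomial.C 1) - q) N := by
  rw [mul_sub, mul_one, lapply_sub, lapply_mul_T, lapply_q_sub]
  congr 1
  · rw [lapply, lapply]
    refine Finsupp.sum_congr fun n _ => ?_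
    congr 1
    rw [Polynomial.eval_comp]
    simp only [Polynomial.eval_add, Polynomial.eval_X, Polynomial.eval_C]
    congr 1
    push_cast
    ring

lemma delta_degree (d : ℕ) (q : Polynomial ℝ) (h : q = 0 ∨ q.natDegree < d + 1) :
    q.comp (X + Polynomial.C 1) - q = 0 ∨ (q.comp (X + Polynomial.C 1) - q).natDegree < d := by
  rcases h with h|h
  · left; rw [h]; simp
  by_cases h0 : q.natDegree = 0
  · left
    have hqc : q = Polynomial.C (q.coeff 0) := Polynomial.eq_C_of_natDegree_eq_zero h0
    rw [hqc]; simp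
  have hq0 : q ≠ 0 := fun hh => h0 (by simp [hh])
  have hXC : (X + Polynomial.C (1:ℝ)).natDegree = 1 := Polynomial.natDegree_X_add_C 1
  have hcomp_nd : (q.comp (X + Polynomial.C 1)).natDegree = q.natDegree := by
    rw [Polynomial.natDegree_comp, hXC, mul_one]
  have hcomp_lc : (q.comp (X + Polynomial.C 1)).leadingCoeff = q.leadingCoeff := by
    rw [Polynomial.leadingCoeff_comp (by rw [hXC]; norm_num),
      (Polynomial.monic_X_add_C (1:ℝ)).leadingCoeff, one_pow, mul_one]
  have hcompid : (q.comp (X + Polynomial.C 1)).comp (X - Polynomial.C 1) = q := by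
    rw [Polynomial.comp_assoc]
    simp
  have hcomp0 : q.comp (X + Polynomial.C 1) ≠ 0 := by
    intro hh
    apply hq0
    rw [← hcompid, hh, Polynomial.zero_comp]
  have hdeg : (q.comp (X + Polynomial.C 1)).degree = q.degree := by
    rw [Polynomial.degree_eq_natDegree hcomp0, Polynomial.degree_eq_natDegree hq0, hcomp_nd]
  have hlt := Polynomial.degree_sub_lt hdeg hcomp0 hcomp_lc
  by_cases hp0 : q.comp (X + Polynomial.C 1) - q = 0
  · left; exact hp0
  right
  have h3 : (q.comp (X + Polynomial.C 1) - q).natDegree < (q.comp (X + Polynomial.C 1)).natDegree :=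
    Polynomial.natDegree_lt_natDegree hp0 hlt
  rw [hcomp_nd] at h3
  omega

lemma lapply_pow_mul_eq_zero : ∀ (d : ℕ) (q : Polynomial ℝ), (q = 0 ∨ q.natDegree < d) →
    ∀ (P : LaurentPolynomial ℝ) (N : ℤ), lapply ((T 1 - 1) ^ d * P) q N = 0 := by
  intro d
  induction d with
  | zero =>
      intro q hq P N
      rcases hq with h|h
      · rw [h, lapply_q_zero]
      · omega
  | succ d ih =>
      intro q hq P N
      have e : (T 1 - 1 : LaurentPolynomial ℝ) ^ (d+1) * P = ((T 1 - 1) ^ d * P) * (T 1 - 1) := by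
        ring
      rw [e, lapply_mul_T1_sub_one]
      exact ih _ (delta_degree d q hq) P N

lemma lapply_toLaurent (u : Polynomial ℝ) (q : Polynomial ℝ) (N : ℤ) :
    lapply (Polynomial.toLaurent u) q N
      = ∑ k ∈ range (u.natDegree + 1), u.coeff k * q.eval ((N + k : ℤ) : ℝ) := by
  conv_lhs => rw [u.as_sum_range' (u.natDegree + 1) (lt_add_one _)]
  rw [map_sum, lapply_sum]
  refine Finset.sum_congr rfl fun k _ => ?_
  rw [Polynomial.toLaurent_C_mul_T k (u.coeff k), lapply_single]

lemma modpoly_zero (d : ℕ) (hd : 0 < d) (v : Polynomial ℝ) (hvd : v.degree < d)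
    (Hv : ∀ q : Polynomial ℝ, q.natDegree < d → ∀ N : ℤ, lapply (Polynomial.toLaurent v) q N = 0) :
    v = 0 := by
  classical
  have hnd : ∀ k, d ≤ k → v.coeff k = 0 := fun k hk =>
    Polynomial.coeff_eq_zero_of_degree_lt (lt_of_lt_of_le hvd (by exact_mod_cast hk))
  have hcoeff : ∀ k₀ ∈ range d, v.coeff k₀ = 0 := by
    intro k₀ hk₀
    by_cases hbig : v.natDegree < k₀
    · exact Polynomial.coeff_eq_zero_of_natDegree_lt hbig
    push_neg at hbig
    -- test polynomial
    set q : Polynomial ℝ := ∏ a ∈ (range d).erase k₀, (X - Polynomial.C (a : ℝ)) with hq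
    have hqdeg : q.natDegree < d := by
      have : q.natDegree = ((range d).erase k₀).card := by
        rw [hq, Polynomial.natDegree_prod _ _ (fun a _ => Polynomial.X_sub_C_ne_zero _)]
        have h1 : ∀ a ∈ (range d).erase k₀, (X - Polynomial.C (a:ℝ)).natDegree = 1 :=
          fun a _ => Polynomial.natDegree_X_sub_C (a:ℝ)
        rw [Finset.sum_congr rfl h1]
        simp
      rw [this, Finset.card_erase_of_mem hk₀, Finset.card_range]
      omega
    have h0 := Hv q hqdeg 0
    rw [lapply_toLaurent] at h0
    have hvnd : v.natDegree < d := by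
      by_cases hv0 : v = 0
      · simp [hv0]; omega
      · exact (Polynomial.natDegree_lt_iff_degree_lt hv0).2 hvd
    have hvsub : range (v.natDegree + 1) ⊆ range d := Finset.range_subset_range.2 (by omega)
    have heval : ∀ k ∈ range (v.natDegree + 1), k ≠ k₀ → v.coeff k * q.eval (((0:ℤ) + k : ℤ) : ℝ) = 0 := by
      intro k hk hkne
      have hkd : k ∈ (range d).erase k₀ := Finset.mem_erase.2 ⟨hkne, hvsub hk⟩
      have : q.eval (((0:ℤ) + k : ℤ) : ℝ) = 0 := by
        rw [hq, Polynomial.eval_prod]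
        apply Finset.prod_eq_zero hkd
        simp
      rw [this, mul_zero]
    have hk₀mem : k₀ ∈ range (v.natDegree + 1) := by
      simp only [Finset.mem_range]; omega
    rw [Finset.sum_eq_single_of_mem k₀ hk₀mem heval] at h0
    have hqval : q.eval (((0:ℤ) + k₀ : ℤ) : ℝ) ≠ 0 := by
      rw [hq, Polynomial.eval_prod]
      apply Finset.prod_ne_zero_iff.2
      intro a ha
      have : (a : ℝ) ≠ ((k₀ : ℤ) : ℝ) := by
        have := (Finset.mem_erase.1 ha).1
        exact_mod_cast fun hh => this (by exact_mod_cast hh)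
      simp only [Polynomial.eval_sub, Polynomial.eval_X, Polynomial.eval_C]
      push_cast
      intro hc
      apply this
      push_cast
      linarith
    exact (mul_eq_zero.1 h0).resolve_right hqval
  ext k
  by_cases hk : k < d
  · simpa using hcoeff k (Finset.mem_range.2 hk)
  · simpa using hnd k (by omega)

/-- Key kernel lemma: if the pairing of `P` with all polynomials of degree `< d` vanishes at all
integer shifts, then `(T 1 - 1)^d` divides `P`. -/
theorem dvd_of_lapply_eq_zero (d : ℕ) (P : LaurentPolynomial ℝ)
    (H : ∀ q : Polynomial ℝ, q.natDegree < d → ∀ N : ℤ, lapply P q N = 0) :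
    (T 1 - 1 : LaurentPolynomial ℝ) ^ d ∣ P := by
  rcases Nat.eq_zero_or_pos d with hd | hd
  · rw [hd, pow_zero]; exact one_dvd _
  obtain ⟨n, p, hp⟩ := P.exists_T_pow
  set D : Polynomial ℝ := (X - Polynomial.C 1) ^ d with hD
  have hDm : D.Monic := (Polynomial.monic_X_sub_C 1).pow d
  have htoD : Polynomial.toLaurent D = (T 1 - 1 : LaurentPolynomial ℝ) ^ d := by
    rw [hD, map_pow, map_sub, Polynomial.toLaurent_X, Polynomial.toLaurent_C]
    norm_num
  have hsplit : p = D * (p /ₘ D) + p %ₘ D := by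
    rw [add_comm]
    exact (Polynomial.modByMonic_add_div p D).symm
  have Hp : ∀ q : Polynomial ℝ, q.natDegree < d → ∀ N : ℤ,
      lapply (Polynomial.toLaurent p) q N = 0 := by
    intro q hq N
    rw [hp, lapply_mul_T]
    exact H q hq (N + n)
  have Hmod : ∀ q : Polynomial ℝ, q.natDegree < d → ∀ N : ℤ,
      lapply (Polynomial.toLaurent (p %ₘ D)) q N = 0 := by
    intro q hq N
    have h1 : lapply (Polynomial.toLaurent (D * (p /ₘ D))) q N = 0 := by
      rw [map_mul, htoD]
      exact lapply_pow_mul_eq_zero d q (Or.inr hq) _ N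
    have := Hp q hq N
    rw [hsplit] at this
    rw [map_add, lapply_add, h1, zero_add] at this
    exact this
  have hvdeg : (p %ₘ D).degree < (d : ℕ) := by
    have := Polynomial.degree_modByMonic_lt p hDm
    have hDdeg : D.degree = (d : ℕ) := by
      rw [hD, Polynomial.degree_pow, Polynomial.degree_X_sub_C]
      simp
    rwa [hDdeg] at this
  have hv0 : p %ₘ D = 0 := modpoly_zero d hd _ hvdeg Hmod
  have hdvd : (T 1 - 1 : LaurentPolynomial ℝ) ^ d ∣ Polynomial.toLaurent p := by
    rw [hsplit, hv0, add_zero, map_mul, htoD]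
    exact Dvd.intro _ rfl
  obtain ⟨w, hw⟩ := hdvd
  refine ⟨w * T (-n), ?_⟩
  have : P = Polynomial.toLaurent p * T (-n) := by
    rw [hp, mul_assoc, ← T_add]
    simp
  rw [this, hw, mul_assoc]



lemma msp_zero_eq (x : ℝ) : Msp 0 x = 0 := rfl

lemma msp_one_eq (x : ℝ) : Msp 1 x = if 0 ≤ x ∧ x < 1 then 1 else 0 := rfl

lemma msp_succ_eq (n : ℕ) (x : ℝ) : Msp (n+2) x = ∫ t in (0:ℝ)..1, Msp (n+1) (x - t) := rfl

lemma msp_one_indicator : Msp 1 = Set.indicator (Set.Ico (0:ℝ) 1) (fun _ => 1) := by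
  funext x
  rw [msp_one_eq, Set.indicator]
  by_cases h : x ∈ Set.Ico (0:ℝ) 1
  · rw [if_pos h, if_pos]; exact h
  · rw [if_neg h, if_neg]; exact h

lemma msp_one_measurable : Measurable (Msp 1) := by
  rw [msp_one_indicator]
  exact (measurable_const.indicator measurableSet_Ico)

lemma msp_one_basic : Measurable (Msp 1) ∧ (∀ x, 0 ≤ Msp 1 x ∧ Msp 1 x ≤ 1) ∧
    (∀ a b : ℝ, IntervalIntegrable (Msp 1) volume a b) := by
  refine ⟨msp_one_measurable, ?_, ?_⟩
  · intro x; rw [msp_one_eq]; split_ifs <;> norm_num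
  · intro a b
    have hInt : Integrable (Set.indicator (Set.Ico (0:ℝ) 1) (fun _ => (1:ℝ))) volume := by
      rw [MeasureTheory.integrable_indicator_iff measurableSet_Ico]
      exact integrableOn_const (by simp [Real.volume_Ico]) (by simp)
    rw [msp_one_indicator]
    exact hInt.intervalIntegrable

lemma msp_basic (ℓ : ℕ) : Measurable (Msp (ℓ+1)) ∧ (∀ x, 0 ≤ Msp (ℓ+1) x ∧ Msp (ℓ+1) x ≤ 1) ∧
    (∀ a b : ℝ, IntervalIntegrable (Msp (ℓ+1)) volume a b) := by
  induction ℓ with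
  | zero => exact msp_one_basic
  | succ n ih =>
    obtain ⟨hmeas, hbd, hint⟩ := ih
    have hprim : ∀ x : ℝ, Msp (n+2) x
        = (∫ u in (0:ℝ)..x, Msp (n+1) u) - ∫ u in (0:ℝ)..(x-1), Msp (n+1) u := by
      intro x
      rw [msp_succ_eq, intervalIntegral.integral_comp_sub_left (Msp (n+1)) x,
        show x - (0:ℝ) = x by ring,
        ← intervalIntegral.integral_interval_sub_left (hint 0 x) (hint 0 (x-1))]
    have hcont : Continuous (Msp (n+2)) := by
      have h1 := intervalIntegral.continuous_primitive hint 0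
      have h2 : Msp (n+2) = fun x =>
          (∫ u in (0:ℝ)..x, Msp (n+1) u) - ∫ u in (0:ℝ)..(x-1), Msp (n+1) u :=
        funext hprim
      rw [h2]
      exact h1.sub (h1.comp (continuous_id.sub continuous_const))
    refine ⟨hcont.measurable, ?_, fun a b => hcont.intervalIntegrable a b⟩
    intro x
    have hii : IntervalIntegrable (fun t => Msp (n+1) (x - t)) volume 0 1 := by
      have := (hint (x - 0) (x - 1)).comp_sub_left x
      simpa using this
    constructor
    · rw [msp_succ_eq]
      apply intervalIntegral.integral_nonneg (by norm_num)
      intro t _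
      exact (hbd _).1
    · rw [msp_succ_eq]
      calc (∫ t in (0:ℝ)..1, Msp (n+1) (x - t))
          ≤ ∫ _t in (0:ℝ)..1, (1:ℝ) := by
            apply intervalIntegral.integral_mono_on (by norm_num) hii
              intervalIntegrable_const
            intro t _
            exact (hbd _).2
        _ = 1 := by simp

lemma msp_window (n : ℕ) (y : ℝ) :
    Msp (n+2) y = ∫ u in (y-1)..y, Msp (n+1) u := by
  rw [msp_succ_eq, intervalIntegral.integral_comp_sub_left (Msp (n+1)) y]
  norm_num

lemma msp_outside : ∀ (ℓ : ℕ) (x : ℝ), (x < 0 ∨ (ℓ:ℝ) ≤ x) → Msp ℓ x = 0 := by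
  intro ℓ
  induction ℓ with
  | zero => intro x _; rfl
  | succ n ihn =>
      match n, ihn with
      | 0, _ =>
          intro x hx
          rw [msp_one_eq, if_neg]
          push_cast at hx
          rcases hx with h|h
          · rintro ⟨h1, -⟩; linarith
          · rintro ⟨-, h2⟩; linarith
      | (m+1), ih =>
          intro x hx
          rw [msp_succ_eq]
          have : Set.EqOn (fun t => Msp (m+1) (x - t)) (fun _ => (0:ℝ)) (Set.uIcc 0 1) := by
            intro t ht
            rw [Set.uIcc_of_le (by norm_num : (0:ℝ) ≤ 1), Set.mem_Icc] at ht
            apply ih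
            push_cast at hx ⊢
            rcases hx with h|h
            · left; linarith [ht.1]
            · right; linarith [ht.2]
          rw [intervalIntegral.integral_congr this]
          simp

lemma II_affine {f : ℝ → ℝ} (h : ∀ a b, IntervalIntegrable f volume a b) (c : ℝ) (a b : ℝ) :
    IntervalIntegrable (fun t => f (c - 2 * t)) volume a b := by
  have h1 : ∀ a b, IntervalIntegrable (fun u => f (c - u)) volume a b := by
    intro a b
    have := (h (c - a) (c - b)).comp_sub_left c
    simpa using this
  have := (h1 (2*a) (2*b)).comp_mul_left (c := 2)
  have e : ∀ y : ℝ, 2 * y / 2 = y := fun y => by ring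
  rw [e, e] at this
  exact this

theorem msp_two_scale : ∀ (ℓ : ℕ) (x : ℝ),
    (2:ℝ)^ℓ * Msp ℓ x = 2 * ∑ j ∈ range (ℓ+1), (ℓ.choose j : ℝ) * Msp ℓ (2*x - j) := by
  intro ℓ
  induction ℓ with
  | zero => intro x; simp [msp_zero_eq]
  | succ n ihn =>
      match n, ihn with
      | 0, _ =>
          intro x
          simp only [pow_one, Finset.sum_range_succ, Finset.sum_range_one]
          rw [msp_one_eq, msp_one_eq, msp_one_eq]
          push_cast
          rcases lt_or_ge x 0 with h0 | h0
          · rw [if_neg (by push_neg; intro h; linarith), if_neg (by push_neg; intro h; linarith),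
              if_neg (by push_neg; intro h; linarith)]
            ring
          rcases lt_or_ge x (1/2) with h1 | h1
          · rw [if_pos ⟨h0, by linarith⟩, if_pos ⟨by linarith, by linarith⟩,
              if_neg (by push_neg; intro h; linarith)]
            norm_num
          rcases lt_or_ge x 1 with h2 | h2
          · rw [if_pos ⟨by linarith, h2⟩, if_neg (by push_neg; intro h; linarith),
              if_pos ⟨by linarith, by linarith⟩]
            norm_num
          · rw [if_neg (by push_neg; intro h; linarith), if_neg (by push_neg; intro h; linarith),
              if_neg (by push_neg; intro h; linarith)]
            ring
      | (m+1), ih =>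
          intro x
          obtain ⟨hmeas, hbd, hint⟩ := msp_basic m
          -- goal at level m+2, IH at level m+1
          have key : Set.EqOn (fun t => (2:ℝ)^(m+1) * Msp (m+1) (x - t))
              (fun t => 2 * ∑ j ∈ range (m+2), ((m+1).choose j : ℝ) * Msp (m+1) ((2*x - j) - 2*t))
              (Set.uIcc 0 1) := by
            intro t _
            have := ih (x - t)
            simp only at this ⊢
            rw [this]
            congr 1
            refine Finset.sum_congr rfl fun j _ => ?_
            congr 2
            ring
          have hii : ∀ j, IntervalIntegrable
              (fun t => Msp (m+1) ((2*x - j) - 2*t)) volume 0 1 :=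
            fun j => II_affine hint (2*x - j) 0 1
          have step1 : (2:ℝ)^(m+2) * Msp (m+2) x
              = 2 * ∫ t in (0:ℝ)..1, (2:ℝ)^(m+1) * Msp (m+1) (x - t) := by
            rw [msp_succ_eq, intervalIntegral.integral_const_mul]
            ring
          have step2 : (∫ t in (0:ℝ)..1, (2:ℝ)^(m+1) * Msp (m+1) (x - t))
              = ∫ t in (0:ℝ)..1,
                  2 * ∑ j ∈ range (m+2), ((m+1).choose j : ℝ) * Msp (m+1) ((2*x - j) - 2*t) :=
            intervalIntegral.integral_congr key
          have step3 : (∫ t in (0:ℝ)..1,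
                  2 * ∑ j ∈ range (m+2), ((m+1).choose j : ℝ) * Msp (m+1) ((2*x - j) - 2*t))
              = 2 * ∑ j ∈ range (m+2), ((m+1).choose j : ℝ)
                  * ∫ t in (0:ℝ)..1, Msp (m+1) ((2*x - j) - 2*t) := by
            rw [intervalIntegral.integral_const_mul]
            congr 1
            have hfs := intervalIntegral.integral_finset_sum (μ := volume) (a := (0:ℝ)) (b := 1)
              (s := range (m+2))
              (f := fun j t => ((m+1).choose j : ℝ) * Msp (m+1) ((2*x - (j:ℝ)) - 2*t))
              (fun j _ => ((hii (j:ℝ)).const_mul _))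
            rw [hfs]
            exact Finset.sum_congr rfl fun j _ => intervalIntegral.integral_const_mul _ _
          have step4 : ∀ j : ℕ, (∫ t in (0:ℝ)..1, Msp (m+1) ((2*x - j) - 2*t))
              = 2⁻¹ * (Msp (m+2) (2*x - ((j:ℝ)+1)) + Msp (m+2) (2*x - j)) := by
            intro j
            rw [intervalIntegral.integral_comp_sub_mul (Msp (m+1)) two_ne_zero (2*x - j)]
            have hadj : (∫ u in (2*x - (j:ℝ) - 2*1)..(2*x - (j:ℝ) - 2*0), Msp (m+1) u)
                = (∫ u in (2*x - (j:ℝ) - 2)..(2*x - (j:ℝ) - 1), Msp (m+1) u)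
                  + ∫ u in (2*x - (j:ℝ) - 1)..(2*x - (j:ℝ) - 0), Msp (m+1) u := by
              rw [intervalIntegral.integral_add_adjacent_intervals (hint _ _) (hint _ _)]
              norm_num
            rw [smul_eq_mul, hadj]
            have w1 : Msp (m+2) (2*x - ((j:ℝ)+1)) = ∫ u in (2*x - (j:ℝ) - 2)..(2*x - (j:ℝ) - 1),
                Msp (m+1) u := by
              rw [msp_window]
              congr 1 <;> ring
            have w2 : Msp (m+2) (2*x - (j:ℝ)) = ∫ u in (2*x - (j:ℝ) - 1)..(2*x - (j:ℝ) - 0),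
                Msp (m+1) u := by
              rw [msp_window]
              congr 1 <;> ring
            rw [w1, w2]
          calc (2:ℝ)^(m+2) * Msp (m+2) x
              = 2 * (2 * ∑ j ∈ range (m+2), ((m+1).choose j : ℝ)
                  * ∫ t in (0:ℝ)..1, Msp (m+1) ((2*x - j) - 2*t)) := by
                rw [step1, step2, step3]
            _ = 2 * ∑ j ∈ range (m+2), (2 * (((m+1).choose j : ℝ)
                  * ∫ t in (0:ℝ)..1, Msp (m+1) ((2*x - j) - 2*t))) := by
                rw [Finset.mul_sum (range (m+2))]
            _ = 2 * ∑ j ∈ range (m+2), (((m+1).choose j : ℝ) * Msp (m+2) (2*x - j)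
                  + ((m+1).choose j : ℝ) * Msp (m+2) (2*x - ((j+1:ℕ):ℝ))) := by
                refine congrArg _ (Finset.sum_congr rfl fun j _ => ?_)
                rw [step4 j]
                push_cast
                ring
            _ = 2 * ((∑ j ∈ range (m+2), (m+1).choose j • Msp (m+2) (2*x - j))
                  + ∑ j ∈ range (m+2), (m+1).choose j • Msp (m+2) (2*x - ((j+1:ℕ):ℝ))) := by
                refine congrArg _ ?_
                rw [← Finset.sum_add_distrib]
                refine Finset.sum_congr rfl fun j _ => ?_
                rw [nsmul_eq_mul, nsmul_eq_mul]
            _ = 2 * ∑ k ∈ range (m+3), (m+2).choose k • Msp (m+2) (2*x - k) := by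
                rw [← sum_range_pascal (m+1) (fun k => Msp (m+2) (2*x - (k:ℝ)))]
            _ = 2 * ∑ j ∈ range (m+2+1), ((m+2).choose j : ℝ) * Msp (m+2) (2*x - j) := by
                refine congrArg _ (Finset.sum_congr rfl fun k _ => nsmul_eq_mul _ _)



/- #### grid identities from the reproduction property -/

lemma grid_identity {r μ : ℕ} {lam : ℤ → ℝ} (hrep : Reproduces r μ lam)
    (θ : ℝ) (hθ0 : 0 ≤ θ) (hθ1 : θ < 1) (g : Polynomial ℝ) (hg : g.natDegree < 2*r) (N : ℤ) :
    ∑ t ∈ range (2*r+1), Msp (2*r) ((t:ℝ) + θ) *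
        (∑ j ∈ Finset.Icc (-(μ:ℤ)) (μ:ℤ), lam j * g.eval (((N - t : ℤ):ℝ) - (j:ℝ) + (r:ℝ)))
      = g.eval ((N:ℝ) + θ) := by
  have h := hrep g hg ((N:ℝ) + θ)
  have hsupp : ∀ s : ℤ, s ∉ Finset.Icc (N - (2*r:ℕ)) N →
      (∑ j ∈ Finset.Icc (-(μ:ℤ)) (μ:ℤ), lam j * g.eval ((s:ℝ) - (j:ℝ) + (r:ℝ)))
        * Msp (2*r) ((N:ℝ) + θ - (s:ℝ)) = 0 := by
    intro s hs
    rw [Finset.mem_Icc] at hs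
    push_neg at hs
    have hM : Msp (2*r) ((N:ℝ) + θ - (s:ℝ)) = 0 := by
      apply msp_outside
      by_cases hNs : N < s
      · left
        have h1 : (N:ℝ) + 1 ≤ (s:ℝ) := by exact_mod_cast hNs
        linarith
      · right
        push_neg at hNs
        have h2 : ¬ (N - (2*r:ℕ) ≤ s) := fun hc => absurd (hs hc) (not_lt.2 hNs)
        push_neg at h2
        have h3 : (s:ℝ) + 1 ≤ (N:ℝ) - (2*r:ℕ) := by exact_mod_cast h2
        push_cast at h3 ⊢
        linarith
    rw [hM, mul_zero]
  rw [tsum_eq_sum (hsupp)] at h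
  rw [sum_Icc_eq_sum_range (2*r) N] at h
  rw [← h]
  refine Finset.sum_congr rfl fun t ht => ?_
  rw [mul_comm]
  congr 1
  push_cast
  ring

/- #### the Laurent polynomials built from spline values -/

def Wlau (r : ℕ) : LaurentPolynomial ℝ :=
  ∑ t ∈ range (2*r+1), LaurentPolynomial.C (Msp (2*r) (t:ℝ)) * LaurentPolynomial.T (-(t:ℤ))

def W2lau (r : ℕ) : LaurentPolynomial ℝ :=
  ∑ t ∈ range (2*r+1), LaurentPolynomial.C (Msp (2*r) (t:ℝ)) * LaurentPolynomial.T (-(2*(t:ℤ)))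

def V2lau (r : ℕ) : LaurentPolynomial ℝ :=
  ∑ t ∈ range (2*r+1), LaurentPolynomial.C (Msp (2*r) ((t:ℝ)+1/2)) * LaurentPolynomial.T (-(2*(t:ℤ)))

lemma expand_sum_mul (s : Finset ℕ) (c : ℕ → ℝ) (e : ℕ → ℤ) (r0 : ℤ) (μ : ℕ) (lam : ℤ → ℝ)
    (e2 : ℤ → ℤ) :
    (∑ t ∈ s, LaurentPolynomial.C (c t) * T (e t)) *
        (T r0 * ∑ j ∈ Finset.Icc (-(μ:ℤ)) (μ:ℤ), LaurentPolynomial.C (lam j) * T (e2 j))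
      = ∑ t ∈ s, ∑ j ∈ Finset.Icc (-(μ:ℤ)) (μ:ℤ),
          LaurentPolynomial.C (c t * lam j) * T (r0 + e2 j + e t) := by
  rw [Finset.sum_mul]
  refine Finset.sum_congr rfl fun t _ => ?_
  rw [Finset.mul_sum, Finset.mul_sum]
  refine Finset.sum_congr rfl fun j _ => ?_
  rw [map_mul, T_add, T_add]
  ring

lemma lapply_T (n : ℤ) (q : Polynomial ℝ) (N : ℤ) :
    lapply (T n) q N = q.eval ((N + n : ℤ) : ℝ) := by
  rw [← one_mul (LaurentPolynomial.T n),
    show (1:LaurentPolynomial ℝ) = LaurentPolynomial.C 1 from (map_one _).symm,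
    lapply_single, one_mul]

/- #### the three congruence inputs -/

lemma keyF1 {r μ : ℕ} {lam : ℤ → ℝ} (heven : EvenSeq μ lam) (hrep : Reproduces r μ lam)
    (q : Polynomial ℝ) (hq : q.natDegree < 2*r) (N : ℤ) :
    lapply (Wlau r * PLam r μ lam - 1) q N = 0 := by
  rw [lapply_sub, lapply_one, Wlau, PLam,
    expand_sum_mul (range (2*r+1)) (fun t => Msp (2*r) (t:ℝ)) (fun t => -(t:ℤ)) (r:ℤ) μ lam (fun j => j),
    lapply_sum]
  simp only [lapply_sum, lapply_single]
  have flip : ∀ t ∈ range (2*r+1),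
      (∑ j ∈ Finset.Icc (-(μ:ℤ)) (μ:ℤ), (Msp (2*r) (t:ℝ) * lam j)
          * q.eval (((N + ((r:ℤ) + j + -(t:ℤ))) : ℤ) : ℝ))
        = Msp (2*r) ((t:ℝ) + 0) * (∑ j ∈ Finset.Icc (-(μ:ℤ)) (μ:ℤ),
            lam j * q.eval (((N - t : ℤ):ℝ) - (j:ℝ) + (r:ℝ))) := by
    intro t _
    rw [sum_Icc_neg μ (fun j => (Msp (2*r) (t:ℝ) * lam j)
      * q.eval (((N + ((r:ℤ) + j + -(t:ℤ))) : ℤ) : ℝ)), Finset.mul_sum]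
    refine Finset.sum_congr rfl fun j hj => ?_
    rw [heven.1 j]
    have harg : (((N + ((r:ℤ) + -j + -(t:ℤ))) : ℤ) : ℝ) = ((N - t : ℤ):ℝ) - (j:ℝ) + (r:ℝ) := by
      push_cast
      ring
    rw [harg, add_zero]
    ring
  rw [Finset.sum_congr rfl flip, grid_identity hrep 0 le_rfl (by norm_num) q hq N]
  simp

lemma keyF2 {r μ : ℕ} {lam : ℤ → ℝ} (heven : EvenSeq μ lam) (hrep : Reproduces r μ lam)
    (q : Polynomial ℝ) (hq : q.natDegree < 2*r) (N : ℤ) :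
    lapply (W2lau r * PLam2 r μ lam - 1) q N = 0 := by
  set g := q.comp (Polynomial.C 2 * Polynomial.X + Polynomial.C (N:ℝ)) with hgdef
  have hgdeg : g.natDegree < 2*r := by
    rw [hgdef, Polynomial.natDegree_comp, Polynomial.natDegree_linear two_ne_zero, mul_one]
    exact hq
  have hgeval : ∀ y : ℝ, g.eval y = q.eval (2*y + N) := fun y => by
    rw [hgdef, Polynomial.eval_comp]
    simp
  rw [lapply_sub, lapply_one, W2lau, PLam2,
    expand_sum_mul (range (2*r+1)) (fun t => Msp (2*r) (t:ℝ)) (fun t => -(2*(t:ℤ))) (2*r:ℤ) μ lam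
      (fun j => 2*j),
    lapply_sum]
  simp only [lapply_sum, lapply_single]
  have flip : ∀ t ∈ range (2*r+1),
      (∑ j ∈ Finset.Icc (-(μ:ℤ)) (μ:ℤ), (Msp (2*r) (t:ℝ) * lam j)
          * q.eval (((N + ((2*r:ℤ) + 2*j + -(2*(t:ℤ)))) : ℤ) : ℝ))
        = Msp (2*r) ((t:ℝ) + 0) * (∑ j ∈ Finset.Icc (-(μ:ℤ)) (μ:ℤ),
            lam j * g.eval ((((0:ℤ) - t : ℤ):ℝ) - (j:ℝ) + (r:ℝ))) := by
    intro t _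
    rw [sum_Icc_neg μ (fun j => (Msp (2*r) (t:ℝ) * lam j)
      * q.eval (((N + ((2*r:ℤ) + 2*j + -(2*(t:ℤ)))) : ℤ) : ℝ)), Finset.mul_sum]
    refine Finset.sum_congr rfl fun j hj => ?_
    rw [heven.1 j, hgeval]
    have harg : (((N + ((2*r:ℤ) + 2*(-j) + -(2*(t:ℤ)))) : ℤ) : ℝ)
        = 2*((((0:ℤ) - t : ℤ):ℝ) - (j:ℝ) + (r:ℝ)) + N := by
      push_cast
      ring
    rw [harg, add_zero]
    ring
  rw [Finset.sum_congr rfl flip, grid_identity hrep 0 le_rfl (by norm_num) g hgdeg 0, hgeval]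
  norm_num

lemma keyF3 {r μ : ℕ} {lam : ℤ → ℝ} (heven : EvenSeq μ lam) (hrep : Reproduces r μ lam)
    (q : Polynomial ℝ) (hq : q.natDegree < 2*r) (N : ℤ) :
    lapply (V2lau r * PLam2 r μ lam - T 1) q N = 0 := by
  set g := q.comp (Polynomial.C 2 * Polynomial.X + Polynomial.C (N:ℝ)) with hgdef
  have hgdeg : g.natDegree < 2*r := by
    rw [hgdef, Polynomial.natDegree_comp, Polynomial.natDegree_linear two_ne_zero, mul_one]
    exact hq
  have hgeval : ∀ y : ℝ, g.eval y = q.eval (2*y + N) := fun y => by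
    rw [hgdef, Polynomial.eval_comp]
    simp
  rw [lapply_sub, lapply_T, V2lau, PLam2,
    expand_sum_mul (range (2*r+1)) (fun t => Msp (2*r) ((t:ℝ)+1/2)) (fun t => -(2*(t:ℤ)))
      (2*r:ℤ) μ lam (fun j => 2*j),
    lapply_sum]
  simp only [lapply_sum, lapply_single]
  have flip : ∀ t ∈ range (2*r+1),
      (∑ j ∈ Finset.Icc (-(μ:ℤ)) (μ:ℤ), (Msp (2*r) ((t:ℝ)+1/2) * lam j)
          * q.eval (((N + ((2*r:ℤ) + 2*j + -(2*(t:ℤ)))) : ℤ) : ℝ))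
        = Msp (2*r) ((t:ℝ) + 2⁻¹) * (∑ j ∈ Finset.Icc (-(μ:ℤ)) (μ:ℤ),
            lam j * g.eval ((((0:ℤ) - t : ℤ):ℝ) - (j:ℝ) + (r:ℝ))) := by
    intro t _
    rw [sum_Icc_neg μ (fun j => (Msp (2*r) ((t:ℝ)+1/2) * lam j)
      * q.eval (((N + ((2*r:ℤ) + 2*j + -(2*(t:ℤ)))) : ℤ) : ℝ)), Finset.mul_sum]
    refine Finset.sum_congr rfl fun j hj => ?_
    rw [heven.1 j, hgeval]
    have harg : (((N + ((2*r:ℤ) + 2*(-j) + -(2*(t:ℤ)))) : ℤ) : ℝ)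
        = 2*((((0:ℤ) - t : ℤ):ℝ) - (j:ℝ) + (r:ℝ)) + N := by
      push_cast
      ring
    rw [harg]
    norm_num
    ring
  rw [Finset.sum_congr rfl flip,
    grid_identity hrep 2⁻¹ (by norm_num) (by norm_num) g hgdeg 0, hgeval]
  have : 2*(((0:ℤ):ℝ) + 2⁻¹) + (N:ℝ) = ((N + 1 : ℤ) : ℝ) := by
    push_cast
    ring
  rw [this]
  ring

/- #### binomial expansions -/

lemma bin_exp (n : ℕ) : ((1:LaurentPolynomial ℝ) + T (-1))^n
    = ∑ k ∈ range (n+1), LaurentPolynomial.C ((n.choose k : ℝ)) * T (-(k:ℤ)) := by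
  rw [add_comm, add_pow]
  refine Finset.sum_congr rfl fun k hk => ?_
  rw [one_pow, mul_one, T_pow, show ((k:ℕ) * (-1:ℤ)) = -(k:ℤ) from by push_cast; ring,
    show ((n.choose k : ℕ) : LaurentPolynomial ℝ) = LaurentPolynomial.C ((n.choose k : ℝ)) from by
      push_cast
      rfl]
  ring

lemma bin_exp_neg (n : ℕ) : ((1:LaurentPolynomial ℝ) - T (-1))^n
    = ∑ k ∈ range (n+1), LaurentPolynomial.C ((-1:ℝ)^k * (n.choose k : ℝ)) * T (-(k:ℤ)) := by
  rw [sub_eq_add_neg, add_comm, add_pow]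
  refine Finset.sum_congr rfl fun k hk => ?_
  rw [one_pow, mul_one, neg_pow, T_pow, show ((k:ℕ) * (-1:ℤ)) = -(k:ℤ) from by push_cast; ring,
    show ((n.choose k : ℕ) : LaurentPolynomial ℝ) = LaurentPolynomial.C ((n.choose k : ℝ)) from by
      push_cast
      rfl,
    show ((-1:LaurentPolynomial ℝ))^k = LaurentPolynomial.C ((-1:ℝ)^k) from by
      rw [map_pow, map_neg, map_one],
    map_mul]
  ring

lemma Se_add_So (r : ℕ) :
    (∑ j ∈ Finset.range (r+1),
        LaurentPolynomial.C (((2*r).choose (2*j) : ℝ)) * LaurentPolynomial.T (-(2*(j:ℤ))))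
      + (∑ j ∈ Finset.range r,
        LaurentPolynomial.C (((2*r).choose (2*j+1) : ℝ)) * LaurentPolynomial.T (-(2*(j:ℤ)+1)))
      = (1 + T (-1))^(2*r) := by
  rw [bin_exp (2*r),
    sum_range_even_odd r (fun k => LaurentPolynomial.C (((2*r).choose k : ℝ)) * T (-(k:ℤ)))]
  congr 1
  all_goals refine Finset.sum_congr rfl fun j _ => ?_
  all_goals norm_cast

lemma Se_sub_So (r : ℕ) :
    (∑ j ∈ Finset.range (r+1),
        LaurentPolynomial.C (((2*r).choose (2*j) : ℝ)) * LaurentPolynomial.T (-(2*(j:ℤ))))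
      - (∑ j ∈ Finset.range r,
        LaurentPolynomial.C (((2*r).choose (2*j+1) : ℝ)) * LaurentPolynomial.T (-(2*(j:ℤ)+1)))
      = T (-(2*(r:ℤ))) * (T 1 - 1)^(2*r) := by
  have h1 : (1:LaurentPolynomial ℝ) - T (-1) = T (-1) * (T 1 - 1) := by
    rw [mul_sub, ← T_add]
    norm_num
  have h2 : ((1:LaurentPolynomial ℝ) - T (-1))^(2*r) = T (-(2*(r:ℤ))) * (T 1 - 1)^(2*r) := by
    rw [h1, mul_pow, T_pow]
    congr 2
    push_cast
    ring
  rw [← h2, bin_exp_neg,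
    sum_range_even_odd r (fun k => LaurentPolynomial.C ((-1:ℝ)^k * ((2*r).choose k : ℝ))
      * T (-(k:ℤ)))]
  rw [sub_eq_add_neg, ← Finset.sum_neg_distrib]
  congr 1
  · refine Finset.sum_congr rfl fun j _ => ?_
    rw [show ((-1:ℝ))^(2*j) = 1 from by rw [pow_mul, neg_one_sq, one_pow], one_mul,
      show (-(2*(j:ℤ))) = -(((2*j:ℕ)):ℤ) from by push_cast; ring]
  · refine Finset.sum_congr rfl fun j _ => ?_
    rw [show ((-1:ℝ))^(2*j+1) = -1 from by
        rw [pow_succ, pow_mul, neg_one_sq, one_pow, one_mul],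
      show (-(2*(j:ℤ)+1)) = -(((2*j+1:ℕ)):ℤ) from by push_cast; ring,
      neg_one_mul, map_neg, neg_mul]

/- #### the two-scale identity in Laurent form -/

lemma two_scale_coeff {r : ℕ} (hr : 1 ≤ r) (m : ℕ) :
    (2:ℝ)^(2*r-1) * Msp (2*r) ((m:ℝ)/2)
      = ∑ k ∈ range (2*r+1), ((2*r).choose k : ℝ) * Msp (2*r) ((m:ℝ) - k) := by
  have h := msp_two_scale (2*r) ((m:ℝ)/2)
  have e1 : (2:ℝ)^(2*r) = 2 * (2:ℝ)^(2*r-1) := by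
    rw [← pow_succ']
    congr 1
    omega
  rw [e1, mul_assoc] at h
  have h2 := mul_left_cancel₀ (two_ne_zero) h
  rw [h2]
  refine Finset.sum_congr rfl fun k _ => ?_
  congr 2
  ring

lemma keyF4 {r : ℕ} (hr : 1 ≤ r) :
    LaurentPolynomial.C ((2:ℝ)^(2*r-1)) * (W2lau r + T (-1) * V2lau r)
      = Wlau r * (1 + T (-1))^(2*r) := by
  set c2 : ℝ := (2:ℝ)^(2*r-1) with hc2
  set f : ℕ → LaurentPolynomial ℝ :=
    fun m => LaurentPolynomial.C (c2 * Msp (2*r) ((m:ℝ)/2)) * T (-(m:ℤ)) with hf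
  have hL : LaurentPolynomial.C c2 * (W2lau r + T (-1) * V2lau r)
      = ∑ m ∈ range (4*r+2), f m := by
    rw [show (4*r+2) = (2*(2*r)+1) + 1 from by ring, Finset.sum_range_succ,
      sum_range_even_odd (2*r) f, add_assoc]
    rw [W2lau, V2lau, mul_add, Finset.mul_sum, Finset.mul_sum, Finset.mul_sum]
    congr 1
    · refine Finset.sum_congr rfl fun t _ => ?_
      simp only [hf]
      rw [show ((2*t:ℕ):ℝ)/2 = (t:ℝ) from by push_cast; ring,
        show (-((2*t:ℕ):ℤ)) = -(2*(t:ℤ)) from by push_cast; ring,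
        ← mul_assoc, ← map_mul]
    · rw [← Finset.sum_range_succ (fun j => f (2*j+1)) (2*r)]
      refine Finset.sum_congr rfl fun t _ => ?_
      simp only [hf]
      rw [show ((2*t+1:ℕ):ℝ)/2 = (t:ℝ)+1/2 from by push_cast; ring,
        show (-((2*t+1:ℕ):ℤ)) = (-(2*(t:ℤ))) + (-1) from by push_cast; ring,
        T_add, map_mul]
      ring
  have hS : ∀ m ∈ range (4*r+2), f m
      = ∑ k ∈ range (2*r+1),
          LaurentPolynomial.C (Msp (2*r) ((m:ℝ) - k) * ((2*r).choose k : ℝ)) * T (-(m:ℤ)) := by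
    intro m _
    simp only [hf]
    rw [two_scale_coeff hr m, map_sum, Finset.sum_mul]
    refine Finset.sum_congr rfl fun k _ => ?_
    rw [mul_comm (((2*r).choose k : ℝ)) (Msp (2*r) ((m:ℝ) - k))]
  have hRHS : ∑ m ∈ range (4*r+2), f m
      = ∑ k ∈ range (2*r+1), ∑ m ∈ range (4*r+2),
          LaurentPolynomial.C (Msp (2*r) ((m:ℝ) - k) * ((2*r).choose k : ℝ)) * T (-(m:ℤ)) := by
    rw [Finset.sum_congr rfl hS]
    exact Finset.sum_comm
  have hLHS : Wlau r * (1 + T (-1))^(2*r)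
      = ∑ k ∈ range (2*r+1), ∑ t ∈ range (2*r+1),
          (LaurentPolynomial.C (Msp (2*r) (t:ℝ)) * T (-(t:ℤ)))
            * (LaurentPolynomial.C (((2*r).choose k : ℝ)) * T (-(k:ℤ))) := by
    rw [bin_exp, Wlau, Finset.sum_mul_sum]
    exact Finset.sum_comm
  rw [hL, hRHS, hLHS]
  refine Finset.sum_congr rfl fun k hk => ?_
  rw [Finset.mem_range] at hk
  have himage : ∑ m ∈ (range (2*r+1)).image (· + k),
        LaurentPolynomial.C (Msp (2*r) ((m:ℝ) - k) * ((2*r).choose k : ℝ)) * T (-(m:ℤ))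
      = ∑ t ∈ range (2*r+1),
          LaurentPolynomial.C (Msp (2*r) (((t+k:ℕ):ℝ) - k) * ((2*r).choose k : ℝ))
            * T (-((t+k:ℕ):ℤ)) :=
    Finset.sum_image (fun a _ b _ h => by omega)
  have hsubset : (range (2*r+1)).image (· + k) ⊆ range (4*r+2) := by
    intro m hm
    rw [Finset.mem_image] at hm
    obtain ⟨t, ht, rfl⟩ := hm
    rw [Finset.mem_range] at ht ⊢
    omega
  have hzero : ∀ m ∈ range (4*r+2), m ∉ (range (2*r+1)).image (· + k) →
      LaurentPolynomial.C (Msp (2*r) ((m:ℝ) - k) * ((2*r).choose k : ℝ)) * T (-(m:ℤ)) = 0 := by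
    intro m _ hnot
    rw [Finset.mem_image] at hnot
    push_neg at hnot
    have hM : Msp (2*r) ((m:ℝ) - k) = 0 := by
      apply msp_outside
      rcases lt_or_ge m k with hcase | hcase
      · left
        have h1 : (m:ℝ) < (k:ℝ) := by exact_mod_cast hcase
        linarith
      · right
        have hgt : 2*r + k < m := by
          by_contra hcon
          push_neg at hcon
          exact hnot (m - k) (by rw [Finset.mem_range]; omega) (by omega)
        have h1 : ((2*r:ℕ):ℝ) + (k:ℝ) + 1 ≤ (m:ℝ) := by exact_mod_cast hgt
        push_cast at h1 ⊢
        linarith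
    rw [hM, zero_mul, map_zero, zero_mul]
  symm
  calc ∑ t ∈ range (2*r+1), (LaurentPolynomial.C (Msp (2*r) (t:ℝ)) * T (-(t:ℤ)))
          * (LaurentPolynomial.C (((2*r).choose k : ℝ)) * T (-(k:ℤ)))
      = ∑ t ∈ range (2*r+1),
          LaurentPolynomial.C (Msp (2*r) (((t+k:ℕ):ℝ) - k) * ((2*r).choose k : ℝ))
            * T (-((t+k:ℕ):ℤ)) := by
        refine Finset.sum_congr rfl fun t _ => ?_
        rw [show (-((t+k:ℕ):ℤ)) = -(t:ℤ) + -(k:ℤ) from by push_cast; ring, T_add,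
          show Msp (2*r) (((t+k:ℕ):ℝ) - k) = Msp (2*r) (t:ℝ) from by
            congr 1
            push_cast
            ring,
          map_mul]
        ring
    _ = ∑ m ∈ (range (2*r+1)).image (· + k),
          LaurentPolynomial.C (Msp (2*r) ((m:ℝ) - k) * ((2*r).choose k : ℝ)) * T (-(m:ℤ)) :=
        himage.symm
    _ = ∑ m ∈ range (4*r+2),
          LaurentPolynomial.C (Msp (2*r) ((m:ℝ) - k) * ((2*r).choose k : ℝ)) * T (-(m:ℤ)) :=
        Finset.sum_subset hsubset hzero


/- #### abstract commutative-ring computation -/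

lemma quotient_ring_lemma {R : Type*} [CommRing R] (w p w2 p2 v2 t1 tm1 c ci se so half : R)
    (e1 : w * p = 1) (e2 : w2 * p2 = 1) (e3 : v2 * p2 = t1)
    (eT : tm1 * t1 = 1)
    (e4 : c * (w2 + tm1 * v2) = w * (se + so))
    (e5b : se = so)
    (eci : ci * c = 1)
    (eH : half * (1+1) = 1) :
    p = ci * p2 * se := by
  have h1 : (1+1) * (w * se * p2) = (1+1) * c := by
    have h2 : c * (1+1) = c * (w2*p2) + c * (tm1 * (v2 * p2)) := by
      rw [e2, e3]
      linear_combination (-c) * eT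
    have h3 : c * (w2*p2) + c*(tm1*(v2*p2)) = w*(se+so)*p2 := by
      linear_combination p2 * e4
    have h4 : w*(se+so)*p2 = (1+1)*(w*se*p2) := by
      rw [← e5b]
      ring
    linear_combination - h2 - h3 - h4
  have key : w * se * p2 = c := by
    calc w * se * p2 = half*((1+1)*(w*se*p2)) := by linear_combination (-(w*se*p2)) * eH
      _ = half*((1+1)*c) := by rw [h1]
      _ = c := by linear_combination c * eH
  have hX : w * (ci * p2 * se) = 1 := by
    calc w * (ci*p2*se) = ci * (w*se*p2) := by ring
      _ = ci * c := by rw [key]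
      _ = 1 := eci
  calc p = (w*(ci*p2*se)) * p := by rw [hX, one_mul]
    _ = (ci*p2*se) * (w*p) := by ring
    _ = ci*p2*se := by rw [e1, mul_one]

/-- `P_even` and `P_odd` are divisible by `(z−1)^{2r}`. -/
theorem Peven_Podd_factor (r μ : ℕ) (hr : 1 ≤ r) (hμ : r - 1 ≤ μ) (lam : ℤ → ℝ)
    (heven : EvenSeq μ lam) (hrep : Reproduces r μ lam) :
    (∃ Qe : LaurentPolynomial ℝ,
      Peven r μ lam = (LaurentPolynomial.T 1 - 1) ^ (2*r) * Qe) ∧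
    (∃ Qo : LaurentPolynomial ℝ,
      Podd r μ lam = (LaurentPolynomial.T 1 - 1) ^ (2*r) * Qo) := by
  classical
  set D : LaurentPolynomial ℝ := (LaurentPolynomial.T 1 - 1) ^ (2*r) with hD
  set I : Ideal (LaurentPolynomial ℝ) := Ideal.span {D} with hI
  set π : LaurentPolynomial ℝ →+* (LaurentPolynomial ℝ ⧸ I) := Ideal.Quotient.mk I with hπ
  have hmem : ∀ P : LaurentPolynomial ℝ, D ∣ P → π P = 0 := fun P hP =>
    Ideal.Quotient.eq_zero_iff_mem.2 (Ideal.mem_span_singleton.2 hP)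
  have hmem' : ∀ P : LaurentPolynomial ℝ, π P = 0 → D ∣ P := fun P hP =>
    Ideal.mem_span_singleton.1 (Ideal.Quotient.eq_zero_iff_mem.1 hP)
  -- congruences from the reproduction property
  have e1 : π (Wlau r) * π (PLam r μ lam) = 1 := by
    have h := hmem _ (dvd_of_lapply_eq_zero (2*r) _ (fun q hq N => keyF1 heven hrep q hq N))
    rw [map_sub, map_mul, map_one, sub_eq_zero] at h
    exact h
  have e2 : π (W2lau r) * π (PLam2 r μ lam) = 1 := by
    have h := hmem _ (dvd_of_lapply_eq_zero (2*r) _ (fun q hq N => keyF2 heven hrep q hq N))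
    rw [map_sub, map_mul, map_one, sub_eq_zero] at h
    exact h
  have e3 : π (V2lau r) * π (PLam2 r μ lam) = π (T 1) := by
    have h := hmem _ (dvd_of_lapply_eq_zero (2*r) _ (fun q hq N => keyF3 heven hrep q hq N))
    rw [map_sub, map_mul, sub_eq_zero] at h
    exact h
  -- notation for the even/odd symbol parts
  set Se : LaurentPolynomial ℝ := ∑ j ∈ Finset.range (r+1),
      LaurentPolynomial.C (((2*r).choose (2*j) : ℝ)) * LaurentPolynomial.T (-(2*(j:ℤ))) with hSe
  set So : LaurentPolynomial ℝ := ∑ j ∈ Finset.range r,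
      LaurentPolynomial.C (((2*r).choose (2*j+1) : ℝ)) * LaurentPolynomial.T (-(2*(j:ℤ)+1))
    with hSo
  -- the exact two-scale identity, with the binomial sum replaced by `Se + So`
  have e4 : π (LaurentPolynomial.C ((2:ℝ)^(2*r-1))) * (π (W2lau r) + π (T (-1)) * π (V2lau r))
      = π (Wlau r) * (π Se + π So) := by
    have h := congrArg π (keyF4 (r := r) hr)
    rw [map_mul, map_mul, map_add, map_mul] at h
    rw [h, ← map_add, ← Se_add_So r]
  have e5b : π Se = π So := by
    have hdvd : D ∣ Se - So := by
      rw [hSe, hSo, Se_sub_So r, hD]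
      exact Dvd.intro_left _ rfl
    have h := hmem _ hdvd
    rw [map_sub, sub_eq_zero] at h
    exact h
  have eT : π (T (-1)) * π (T 1) = 1 := by
    rw [← map_mul, ← T_add]
    norm_num
  have eci : π (LaurentPolynomial.C (((2:ℝ)^(2*r-1))⁻¹))
      * π (LaurentPolynomial.C ((2:ℝ)^(2*r-1))) = 1 := by
    rw [← map_mul, ← map_mul, inv_mul_cancel₀ (by positivity : ((2:ℝ)^(2*r-1)) ≠ 0)]
    exact map_one π
  have eH : π (LaurentPolynomial.C ((1:ℝ)/2)) * (1+1) = 1 := by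
    have h : (LaurentPolynomial.C ((1:ℝ)/2)) * (1+1) = 1 := by
      have h2 : ((1:LaurentPolynomial ℝ)+1) = LaurentPolynomial.C 2 := by
        rw [← map_one (LaurentPolynomial.C (R := ℝ)), ← map_add]
        exact congrArg LaurentPolynomial.C (by norm_num)
      rw [h2, ← map_mul, show (1:ℝ)/2 * 2 = 1 from by norm_num, map_one]
    calc π (LaurentPolynomial.C ((1:ℝ)/2)) * (1+1)
        = π ((LaurentPolynomial.C ((1:ℝ)/2)) * (1+1)) := by rw [map_mul, map_add, map_one]
      _ = 1 := by rw [h, map_one]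
  have hmain : π (PLam r μ lam)
      = π (LaurentPolynomial.C (((2:ℝ)^(2*r-1))⁻¹)) * π (PLam2 r μ lam) * π Se :=
    quotient_ring_lemma (π (Wlau r)) (π (PLam r μ lam)) (π (W2lau r)) (π (PLam2 r μ lam))
      (π (V2lau r)) (π (T 1)) (π (T (-1))) (π (LaurentPolynomial.C ((2:ℝ)^(2*r-1))))
      (π (LaurentPolynomial.C (((2:ℝ)^(2*r-1))⁻¹))) (π Se) (π So)
      (π (LaurentPolynomial.C ((1:ℝ)/2))) e1 e2 e3 eT e4 e5b eci eH
  constructor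
  · have hzero : π (Peven r μ lam) = 0 := by
      rw [Peven, map_sub, map_mul, map_mul, ← hSe, hmain]
      ring
    obtain ⟨Qe, hQe⟩ := hmem' _ hzero
    exact ⟨Qe, hQe⟩
  · have hzero : π (Podd r μ lam) = 0 := by
      rw [Podd, map_sub, map_mul, map_mul, ← hSo, hmain, e5b]
      ring
    obtain ⟨Qo, hQo⟩ := hmem' _ hzero
    exact ⟨Qo, hQo⟩

end PevenPoddAux

end Smolyak
end
end
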